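/- arXiv:1008.5286 — 3 statements merged into one kernel-verified Lean document; each statement's English description precedes it below -/
import Mathlib

section
/- For n×n complex matrices X, Y, real q ≥ 2, λ ∈ (0, 1/2], and a constant C_q ≥ 0 such that (λ‖X+Y‖_q^q + (1-λ)‖X - (λ/(1-λ))Y‖_q^q)^{2/q} ≤ ‖X‖_q^2 + C_q‖Y‖_q^2 holds for all X, Y, the analogous inequality holds at exponent 2q with constant 2C_q + 1, i.e. (λ‖X+Y‖_{2q}^{2q} + (1-λ)‖X - (λ/(1-λ))Y‖_{2q}^{2q})^{1/q} ≤ ‖X‖_{2q}^2 + (2C_q+1)‖Y‖_{2q}^2. -/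
open Matrix

/-- Schatten p-norm of a complex n×n matrix. -/
noncomputable def schattenNorm {n : ℕ} (p : ℝ) (A : Matrix (Fin n) (Fin n) ℂ) : ℝ :=
  (∑ i, (Matrix.isHermitian_conjTranspose_mul_self A).eigenvalues i ^ (p / 2)) ^ (1 / p)

namespace SchattenAux

open Complex Polynomial
open scoped ComplexOrder

variable {n : ℕ}

/-- Spectral sum of `g` over eigenvalues of a Hermitian matrix. -/
noncomputable def tg (g : ℝ → ℝ) (M : Matrix (Fin n) (Fin n) ℂ) : ℝ :=
  if h : M.IsHermitian then ∑ i, g (h.eigenvalues i) else 0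

lemma tg_of_isHermitian (g : ℝ → ℝ) {M : Matrix (Fin n) (Fin n) ℂ} (h : M.IsHermitian) :
    tg g M = ∑ i, g (h.eigenvalues i) := dif_pos h

lemma isHermitian_conj_diagonal (V : Matrix (Fin n) (Fin n) ℂ) (d : Fin n → ℝ) :
    (V * diagonal (fun i => (d i : ℂ)) * Vᴴ).IsHermitian := by
  unfold Matrix.IsHermitian
  simp only [conjTranspose_mul, conjTranspose_conjTranspose, diagonal_conjTranspose]
  rw [mul_assoc]
  congr 2
  ext i
  simp [Pi.star_def]

lemma det_smul_one_sub_conj {V : Matrix (Fin n) (Fin n) ℂ}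
    (hV : V ∈ Matrix.unitaryGroup (Fin n) ℂ) (d : Fin n → ℝ) (t : ℂ) :
    det (t • (1 : Matrix (Fin n) (Fin n) ℂ) - V * diagonal (fun i => (d i : ℂ)) * Vᴴ)
      = ∏ i, (t - (d i : ℂ)) := by
  have h1 : V * Vᴴ = 1 := by
    simpa [star_eq_conjTranspose] using (Matrix.mem_unitaryGroup_iff).mp hV
  have key : t • (1 : Matrix (Fin n) (Fin n) ℂ) - V * diagonal (fun i => (d i : ℂ)) * Vᴴ
      = V * (t • 1 - diagonal fun i => (d i : ℂ)) * Vᴴ := by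
    rw [mul_sub, sub_mul, mul_smul_comm, smul_mul_assoc, mul_one, h1]
  rw [key, det_mul, det_mul, mul_comm (det V), mul_assoc, ← det_mul, h1, det_one, mul_one]
  have : t • (1 : Matrix (Fin n) (Fin n) ℂ) - diagonal (fun i => (d i : ℂ))
      = diagonal (fun i => t - (d i : ℂ)) := by
    rw [smul_one_eq_diagonal, diagonal_sub]
  rw [this, det_diagonal]

lemma multiset_eq_of_two_diag {V U : Matrix (Fin n) (Fin n) ℂ}
    (hV : V ∈ Matrix.unitaryGroup (Fin n) ℂ) (hU : U ∈ Matrix.unitaryGroup (Fin n) ℂ)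
    (d e : Fin n → ℝ)
    (h : V * diagonal (fun i => (d i : ℂ)) * Vᴴ = U * diagonal (fun i => (e i : ℂ)) * Uᴴ) :
    Multiset.map (fun i => ((d i : ℝ) : ℂ)) Finset.univ.val
      = Multiset.map (fun i => ((e i : ℝ) : ℂ)) Finset.univ.val := by
  have hpoly :
      ((Multiset.map (fun i => ((d i : ℝ) : ℂ)) Finset.univ.val).map (fun a => X - C a)).prod
        = ((Multiset.map (fun i => ((e i : ℝ) : ℂ)) Finset.univ.val).map (fun a => X - C a)).prod := by
    apply Polynomial.funext
    intro t
    rw [Polynomial.eval_multiset_prod, Polynomial.eval_multiset_prod]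
    have hd : ∀ f : Fin n → ℝ,
        (Multiset.map (Polynomial.eval t) ((Multiset.map (fun i => ((f i : ℝ) : ℂ))
          Finset.univ.val).map (fun a => X - C a))).prod
        = ∏ i, (t - (f i : ℂ)) := by
      intro f
      rw [Multiset.map_map, Multiset.map_map, Finset.prod_eq_multiset_prod]
      congr 1
      apply Multiset.map_congr rfl
      intro i _
      simp
    rw [hd, hd, ← det_smul_one_sub_conj hV d t, ← det_smul_one_sub_conj hU e t, h]
  have := congrArg Polynomial.roots hpoly
  rwa [Polynomial.roots_multiset_prod_X_sub_C, Polynomial.roots_multiset_prod_X_sub_C] at this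

/-- Decomposition independence: spectral sums can be computed from any unitary
diagonalization. -/
lemma tg_eq_of_diag (g : ℝ → ℝ) {V : Matrix (Fin n) (Fin n) ℂ}
    (hV : V ∈ Matrix.unitaryGroup (Fin n) ℂ) (d : Fin n → ℝ)
    {M : Matrix (Fin n) (Fin n) ℂ}
    (hMd : M = V * diagonal (fun i => (d i : ℂ)) * Vᴴ) :
    tg g M = ∑ i, g (d i) := by
  have hM : M.IsHermitian := hMd ▸ isHermitian_conj_diagonal V d
  rw [tg_of_isHermitian g hM]
  have hspec : M = (hM.eigenvectorUnitary : Matrix (Fin n) (Fin n) ℂ)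
      * diagonal (fun i => ((hM.eigenvalues i : ℝ) : ℂ))
      * (hM.eigenvectorUnitary : Matrix (Fin n) (Fin n) ℂ)ᴴ := by
    conv_lhs => rw [hM.spectral_theorem]
    rw [Unitary.conjStarAlgAut_apply, star_eq_conjTranspose]
    rfl
  have hms := multiset_eq_of_two_diag hV hM.eigenvectorUnitary.2 d hM.eigenvalues
    (hMd ▸ hspec)
  have hsum : ∀ f : Fin n → ℝ, ∑ i, g (f i)
      = ((Multiset.map (fun i => ((f i : ℝ) : ℂ)) Finset.univ.val).map (fun z => g z.re)).sum := by
    intro f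
    rw [Multiset.map_map, Finset.sum]
    apply congrArg
    apply Multiset.map_congr rfl
    intro i _
    simp
  rw [hsum, hsum, hms]

open Complex

variable {n : ℕ}

lemma jensen_weights {r : ℝ} (hr : 1 ≤ r) (w d : Fin n → ℝ) (hw : ∀ i, 0 ≤ w i)
    (hd : ∀ i, 0 ≤ d i) (hsum : ∑ i, w i = 1) :
    (∑ i, w i * d i) ^ r ≤ ∑ i, w i * d i ^ r := by
  have h := Real.inner_le_weight_mul_Lp_of_nonneg Finset.univ hr w d hw hd
  rw [hsum, Real.one_rpow, one_mul] at h
  have h0 : (0:ℝ) ≤ ∑ i, w i * d i :=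
    Finset.sum_nonneg fun i _ => mul_nonneg (hw i) (hd i)
  have hr0 : r ≠ 0 := by linarith
  calc (∑ i, w i * d i) ^ r ≤ ((∑ i, w i * d i ^ r) ^ r⁻¹) ^ r :=
        Real.rpow_le_rpow h0 h (by linarith)
    _ = ∑ i, w i * d i ^ r := by
        rw [← Real.rpow_mul (Finset.sum_nonneg fun i _ => mul_nonneg (hw i)
          (Real.rpow_nonneg (hd i) r)), inv_mul_cancel₀ hr0, Real.rpow_one]

lemma diag_entry_re (V U : Matrix (Fin n) (Fin n) ℂ) (d : Fin n → ℝ) (i : Fin n) :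
    ((Uᴴ * (V * diagonal (fun j => (d j : ℂ)) * Vᴴ) * U) i i).re
      = ∑ j, d j * Complex.normSq ((Vᴴ * U) j i) := by
  have h : Uᴴ * (V * diagonal (fun j => (d j : ℂ)) * Vᴴ) * U
      = (Vᴴ * U)ᴴ * (diagonal (fun j => (d j : ℂ)) * (Vᴴ * U)) := by
    rw [conjTranspose_mul, conjTranspose_conjTranspose]
    simp only [Matrix.mul_assoc]
  rw [h, Matrix.mul_apply]
  rw [Complex.re_sum]
  apply Finset.sum_congr rfl
  intro j _
  rw [Matrix.conjTranspose_apply, Matrix.diagonal_mul]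
  simp only [Complex.star_def]
  have : (starRingEnd ℂ) ((Vᴴ * U) j i) * ((d j : ℂ) * (Vᴴ * U) j i)
      = (d j : ℂ) * ((Vᴴ * U) j i * (starRingEnd ℂ) ((Vᴴ * U) j i)) := by ring
  rw [this, Complex.mul_conj]
  simp

lemma col_normSq_sum {W : Matrix (Fin n) (Fin n) ℂ} (hW : W ∈ Matrix.unitaryGroup (Fin n) ℂ)
    (i : Fin n) : ∑ j, Complex.normSq (W j i) = 1 := by
  have h1 : Wᴴ * W = 1 := by
    simpa [star_eq_conjTranspose] using (Matrix.mem_unitaryGroup_iff').mp hW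
  have h2 := congrArg (fun M : Matrix (Fin n) (Fin n) ℂ => (M i i).re) h1
  simp only [Matrix.mul_apply, Matrix.one_apply_eq, Complex.one_re] at h2
  rw [← h2, Complex.re_sum]
  apply Finset.sum_congr rfl
  intro j _
  rw [Matrix.conjTranspose_apply, mul_comm]
  simp [Complex.star_def, Complex.mul_conj]

lemma row_normSq_sum {W : Matrix (Fin n) (Fin n) ℂ} (hW : W ∈ Matrix.unitaryGroup (Fin n) ℂ)
    (j : Fin n) : ∑ i, Complex.normSq (W j i) = 1 := by
  have h1 : W * Wᴴ = 1 := by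
    simpa [star_eq_conjTranspose] using (Matrix.mem_unitaryGroup_iff).mp hW
  have h2 := congrArg (fun M : Matrix (Fin n) (Fin n) ℂ => (M j j).re) h1
  simp only [Matrix.mul_apply, Matrix.one_apply_eq, Complex.one_re] at h2
  rw [← h2, Complex.re_sum]
  apply Finset.sum_congr rfl
  intro i _
  rw [Matrix.conjTranspose_apply]
  simp [Complex.star_def, Complex.mul_conj]

/-- Diagonal-entries Jensen inequality: for a PSD matrix given by a unitary diagonalization,
the `r`-th powers of diagonal entries in any unitary basis are dominated by the
eigenvalue powers. -/
lemma diag_jensen {r : ℝ} (hr : 1 ≤ r) {V U : Matrix (Fin n) (Fin n) ℂ}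
    (hV : V ∈ Matrix.unitaryGroup (Fin n) ℂ) (hU : U ∈ Matrix.unitaryGroup (Fin n) ℂ)
    (d : Fin n → ℝ) (hd : ∀ i, 0 ≤ d i) :
    ∑ i, (((Uᴴ * (V * diagonal (fun j => (d j : ℂ)) * Vᴴ) * U) i i).re) ^ r
      ≤ ∑ j, d j ^ r := by
  have hWmem : Vᴴ * U ∈ Matrix.unitaryGroup (Fin n) ℂ := by
    rw [← star_eq_conjTranspose]
    exact mul_mem (Unitary.star_mem hV) hU
  calc ∑ i, (((Uᴴ * (V * diagonal (fun j => (d j : ℂ)) * Vᴴ) * U) i i).re) ^ r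
      = ∑ i, (∑ j, Complex.normSq ((Vᴴ * U) j i) * d j) ^ r := by
        apply Finset.sum_congr rfl
        intro i _
        rw [diag_entry_re]
        congr 1
        apply Finset.sum_congr rfl
        intro j _
        ring
    _ ≤ ∑ i, ∑ j, Complex.normSq ((Vᴴ * U) j i) * d j ^ r := by
        apply Finset.sum_le_sum
        intro i _
        exact jensen_weights hr _ d (fun j => Complex.normSq_nonneg _) hd
          (col_normSq_sum hWmem i)
    _ = ∑ j, (∑ i, Complex.normSq ((Vᴴ * U) j i)) * d j ^ r := by
        rw [Finset.sum_comm]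
        apply Finset.sum_congr rfl
        intro j _
        rw [Finset.sum_mul]
    _ = ∑ j, d j ^ r := by
        apply Finset.sum_congr rfl
        intro j _
        rw [row_normSq_sum hWmem, one_mul]



lemma spectral' {M : Matrix (Fin n) (Fin n) ℂ} (hM : M.IsHermitian) :
    M = (hM.eigenvectorUnitary : Matrix (Fin n) (Fin n) ℂ)
      * diagonal (fun i => ((hM.eigenvalues i : ℝ) : ℂ))
      * (hM.eigenvectorUnitary : Matrix (Fin n) (Fin n) ℂ)ᴴ := by
  conv_lhs => rw [hM.spectral_theorem]
  rw [Unitary.conjStarAlgAut_apply, star_eq_conjTranspose]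
  rfl

lemma tg_of_psd {g : ℝ → ℝ} {M : Matrix (Fin n) (Fin n) ℂ} (hM : M.IsHermitian) :
    tg g M = ∑ i, g (hM.eigenvalues i) := tg_of_isHermitian g hM

lemma eig_diag_entry {M : Matrix (Fin n) (Fin n) ℂ} (hM : M.IsHermitian) (i : Fin n) :
    (((hM.eigenvectorUnitary : Matrix (Fin n) (Fin n) ℂ)ᴴ * M
        * (hM.eigenvectorUnitary : Matrix (Fin n) (Fin n) ℂ)) i i).re = hM.eigenvalues i := by
  have h := hM.conjStarAlgAut_star_eigenvectorUnitary
  simp only [Unitary.conjStarAlgAut_star_apply, Unitary.coe_star, star_eq_conjTranspose] at h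
  rw [h]
  simp [Matrix.diagonal_apply_eq]

lemma psd_diag_re_nonneg {Z : Matrix (Fin n) (Fin n) ℂ} (hZ : Z.PosSemidef) (i : Fin n) :
    0 ≤ (Z i i).re := by
  have := hZ.re_dotProduct_nonneg (Pi.single i 1)
  simpa [dotProduct, Matrix.mulVec, Pi.single_apply] using this

lemma conj_diag_re_nonneg {Z : Matrix (Fin n) (Fin n) ℂ} (hZ : Z.PosSemidef)
    (U : Matrix (Fin n) (Fin n) ℂ) (i : Fin n) : 0 ≤ ((Uᴴ * Z * U) i i).re := by
  have h : (Uᴴ * Z * U).PosSemidef := by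
    have := hZ.mul_mul_conjTranspose_same Uᴴ
    simpa using this
  exact psd_diag_re_nonneg h i

lemma pairing_holder {q : ℝ} (hq : 2 ≤ q) (u v : Fin n → ℝ) (hu : ∀ i, 0 ≤ u i)
    (hv : ∀ i, 0 ≤ v i) :
    ∑ i, u i ^ (q - 1) * v i
      ≤ (∑ i, u i ^ q) ^ (1 - 1/q) * (∑ i, v i ^ q) ^ (1/q) := by
  have hq1 : (1:ℝ) < q := by linarith
  have hq0 : (0:ℝ) < q := by linarith
  have hqm1 : (0:ℝ) < q - 1 := by linarith
  have hpq : (q/(q-1)).HolderConjugate q := by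
    rw [Real.holderConjugate_iff]
    constructor
    · rw [lt_div_iff₀ hqm1]; linarith
    · field_simp
      ring
  have h := Real.inner_le_Lp_mul_Lq_of_nonneg Finset.univ hpq
    (f := fun i => u i ^ (q-1)) (g := v)
    (fun i _ => Real.rpow_nonneg (hu i) _) (fun i _ => hv i)
  have h1 : ∀ i, (u i ^ (q-1)) ^ (q/(q-1)) = u i ^ q := by
    intro i
    rw [← Real.rpow_mul (hu i)]
    congr 1
    field_simp
  have h2 : (1:ℝ) / (q/(q-1)) = 1 - 1/q := by field_simp
  rw [h2] at h
  calc ∑ i, u i ^ (q - 1) * v i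
      ≤ (∑ i, (u i ^ (q-1)) ^ (q/(q-1))) ^ (1 - 1/q) * (∑ i, v i ^ q) ^ (1/q) := h
    _ = (∑ i, u i ^ q) ^ (1 - 1/q) * (∑ i, v i ^ q) ^ (1/q) := by
        congr 2
        exact Finset.sum_congr rfl fun i _ => h1 i

lemma div_trick {T c α : ℝ} (hT : 0 ≤ T) (hc : 0 ≤ c) (hα : 0 < α)
    (h : T ≤ T ^ (1 - α) * c) : T ^ α ≤ c := by
  rcases eq_or_lt_of_le hT with hT0 | hT0
  · rw [← hT0, Real.zero_rpow (ne_of_gt hα)]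
    exact hc
  · have hmul := mul_le_mul_of_nonneg_right h (le_of_lt (Real.rpow_pos_of_pos hT0 (α - 1)))
    have hL : T * T ^ (α - 1) = T ^ α := by
      nth_rewrite 1 [← Real.rpow_one T]
      rw [← Real.rpow_add hT0]
      ring_nf
    have hR : T ^ (1 - α) * c * T ^ (α - 1) = c := by
      rw [mul_comm (T ^ (1-α)) c, mul_assoc, ← Real.rpow_add hT0]
      norm_num
    rwa [hL, hR] at hmul

/-- Triangle inequality for spectral `q`-sums of PSD matrices. -/
lemma tri_psd {q : ℝ} (hq : 2 ≤ q) {P₁ P₂ : Matrix (Fin n) (Fin n) ℂ}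
    (h₁ : P₁.PosSemidef) (h₂ : P₂.PosSemidef) :
    tg (fun t => t ^ q) (P₁ + P₂) ^ (1/q)
      ≤ tg (fun t => t ^ q) P₁ ^ (1/q) + tg (fun t => t ^ q) P₂ ^ (1/q) := by
  have hq0 : (0:ℝ) < q := by linarith
  have hM : (P₁ + P₂).PosSemidef := h₁.add h₂
  set U : Matrix (Fin n) (Fin n) ℂ := (hM.1.eigenvectorUnitary : Matrix (Fin n) (Fin n) ℂ) with hU
  set e : Fin n → ℝ := hM.1.eigenvalues with he
  have he0 : ∀ i, 0 ≤ e i := hM.eigenvalues_nonneg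
  set a : Fin n → ℝ := fun i => ((Uᴴ * P₁ * U) i i).re with ha
  set b : Fin n → ℝ := fun i => ((Uᴴ * P₂ * U) i i).re with hb
  have ha0 : ∀ i, 0 ≤ a i := fun i => conj_diag_re_nonneg h₁ U i
  have hb0 : ∀ i, 0 ≤ b i := fun i => conj_diag_re_nonneg h₂ U i
  have hab : ∀ i, e i = a i + b i := by
    intro i
    calc e i = ((Uᴴ * (P₁ + P₂) * U) i i).re := (eig_diag_entry hM.1 i).symm
      _ = a i + b i := by
          rw [Matrix.mul_add, Matrix.add_mul]
          simp [Matrix.add_apply]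
          rfl
  -- diag_jensen bounds
  have hda : ∑ i, a i ^ q ≤ tg (fun t => t ^ q) P₁ := by
    rw [tg_of_psd h₁.1]
    have hdec := spectral' h₁.1
    have := diag_jensen (r := q) (by linarith) h₁.1.eigenvectorUnitary.2
      hM.1.eigenvectorUnitary.2 h₁.1.eigenvalues h₁.eigenvalues_nonneg
    rw [← hdec] at this
    exact this
  have hdb : ∑ i, b i ^ q ≤ tg (fun t => t ^ q) P₂ := by
    rw [tg_of_psd h₂.1]
    have hdec := spectral' h₂.1
    have := diag_jensen (r := q) (by linarith) h₂.1.eigenvectorUnitary.2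
      hM.1.eigenvectorUnitary.2 h₂.1.eigenvalues h₂.eigenvalues_nonneg
    rw [← hdec] at this
    exact this
  set T : ℝ := ∑ i, e i ^ q with hT
  have hT0 : 0 ≤ T := Finset.sum_nonneg fun i _ => Real.rpow_nonneg (he0 i) q
  have htg1 : (0:ℝ) ≤ tg (fun t => t ^ q) P₁ := by
    rw [tg_of_psd h₁.1]
    exact Finset.sum_nonneg fun i _ => Real.rpow_nonneg (h₁.eigenvalues_nonneg i) q
  have htg2 : (0:ℝ) ≤ tg (fun t => t ^ q) P₂ := by
    rw [tg_of_psd h₂.1]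
    exact Finset.sum_nonneg fun i _ => Real.rpow_nonneg (h₂.eigenvalues_nonneg i) q
  have key : T ≤ T ^ (1 - 1/q) *
      (tg (fun t => t ^ q) P₁ ^ (1/q) + tg (fun t => t ^ q) P₂ ^ (1/q)) := by
    have hsplit : T = ∑ i, e i ^ (q-1) * a i + ∑ i, e i ^ (q-1) * b i := by
      rw [← Finset.sum_add_distrib]
      apply Finset.sum_congr rfl
      intro i _
      rw [← mul_add, ← hab i]
      by_cases h0 : e i = 0
      · rw [h0, Real.zero_rpow (ne_of_gt hq0), mul_zero]
      · have h' := Real.rpow_add_one h0 (q-1)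
        rw [sub_add_cancel] at h'
        rw [h']
    have p1 : ∑ i, e i ^ (q-1) * a i
        ≤ T ^ (1-1/q) * tg (fun t => t ^ q) P₁ ^ (1/q) := by
      refine le_trans (pairing_holder hq e a he0 ha0) ?_
      exact mul_le_mul_of_nonneg_left
        (Real.rpow_le_rpow (Finset.sum_nonneg fun i _ => Real.rpow_nonneg (ha0 i) q) hda
          (by positivity)) (Real.rpow_nonneg hT0 _)
    have p2 : ∑ i, e i ^ (q-1) * b i
        ≤ T ^ (1-1/q) * tg (fun t => t ^ q) P₂ ^ (1/q) := by
      refine le_trans (pairing_holder hq e b he0 hb0) ?_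
      exact mul_le_mul_of_nonneg_left
        (Real.rpow_le_rpow (Finset.sum_nonneg fun i _ => Real.rpow_nonneg (hb0 i) q) hdb
          (by positivity)) (Real.rpow_nonneg hT0 _)
    calc T = ∑ i, e i ^ (q-1) * a i + ∑ i, e i ^ (q-1) * b i := hsplit
      _ ≤ T ^ (1-1/q) * tg (fun t => t ^ q) P₁ ^ (1/q)
          + T ^ (1-1/q) * tg (fun t => t ^ q) P₂ ^ (1/q) := add_le_add p1 p2
      _ = T ^ (1-1/q) * (tg (fun t => t ^ q) P₁ ^ (1/q) + tg (fun t => t ^ q) P₂ ^ (1/q)) := by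
          ring
  have hfin := div_trick hT0
    (add_nonneg (Real.rpow_nonneg htg1 _) (Real.rpow_nonneg htg2 _)) (by positivity) key
  rw [tg_of_psd hM.1]
  exact hfin

/-- Loewner monotonicity of spectral `q`-sums on PSD matrices. -/
lemma tg_mono {q : ℝ} (hq : 2 ≤ q) {P M : Matrix (Fin n) (Fin n) ℂ}
    (hP : P.PosSemidef) (hM : M.PosSemidef) (hPM : (M - P).PosSemidef) :
    tg (fun t => t ^ q) P ≤ tg (fun t => t ^ q) M := by
  have hq0 : (0:ℝ) < q := by linarith
  set U : Matrix (Fin n) (Fin n) ℂ := (hP.1.eigenvectorUnitary : Matrix (Fin n) (Fin n) ℂ)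
  set f : Fin n → ℝ := hP.1.eigenvalues with hf
  have hf0 : ∀ i, 0 ≤ f i := hP.eigenvalues_nonneg
  set m : Fin n → ℝ := fun i => ((Uᴴ * M * U) i i).re with hm
  have hm0 : ∀ i, 0 ≤ m i := fun i => conj_diag_re_nonneg hM U i
  have hfm : ∀ i, f i ≤ m i := by
    intro i
    have h1 := conj_diag_re_nonneg hPM U i
    have h2 : Uᴴ * (M - P) * U = Uᴴ * M * U - Uᴴ * P * U := by
      rw [Matrix.mul_sub, Matrix.sub_mul]
    rw [h2] at h1
    have h3 : f i = ((Uᴴ * P * U) i i).re := (eig_diag_entry hP.1 i).symm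
    simp only [Matrix.sub_apply, Complex.sub_re] at h1
    rw [hm, h3]
    linarith
  have hdm : ∑ i, m i ^ q ≤ tg (fun t => t ^ q) M := by
    rw [tg_of_psd hM.1]
    have hdec := spectral' hM.1
    have := diag_jensen (r := q) (by linarith) hM.1.eigenvectorUnitary.2
      hP.1.eigenvectorUnitary.2 hM.1.eigenvalues hM.eigenvalues_nonneg
    rw [← hdec] at this
    exact this
  set T : ℝ := ∑ i, f i ^ q with hT
  have hT0 : 0 ≤ T := Finset.sum_nonneg fun i _ => Real.rpow_nonneg (hf0 i) q
  have htgM : (0:ℝ) ≤ tg (fun t => t ^ q) M := by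
    rw [tg_of_psd hM.1]
    exact Finset.sum_nonneg fun i _ => Real.rpow_nonneg (hM.eigenvalues_nonneg i) q
  have key : T ≤ T ^ (1 - 1/q) * tg (fun t => t ^ q) M ^ (1/q) := by
    have hsplit : T = ∑ i, f i ^ (q-1) * f i := by
      apply Finset.sum_congr rfl
      intro i _
      by_cases h0 : f i = 0
      · rw [h0, Real.zero_rpow (ne_of_gt hq0), mul_zero]
      · have h' := Real.rpow_add_one h0 (q-1)
        rw [sub_add_cancel] at h'
        rw [h']
    have p1 : ∑ i, f i ^ (q-1) * f i ≤ ∑ i, f i ^ (q-1) * m i := by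
      apply Finset.sum_le_sum
      intro i _
      exact mul_le_mul_of_nonneg_left (hfm i) (Real.rpow_nonneg (hf0 i) _)
    have p2 : ∑ i, f i ^ (q-1) * m i
        ≤ T ^ (1-1/q) * tg (fun t => t ^ q) M ^ (1/q) := by
      refine le_trans (pairing_holder hq f m hf0 hm0) ?_
      exact mul_le_mul_of_nonneg_left
        (Real.rpow_le_rpow (Finset.sum_nonneg fun i _ => Real.rpow_nonneg (hm0 i) q) hdm
          (by positivity)) (Real.rpow_nonneg hT0 _)
    calc T = ∑ i, f i ^ (q-1) * f i := hsplit
      _ ≤ ∑ i, f i ^ (q-1) * m i := p1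
      _ ≤ T ^ (1-1/q) * tg (fun t => t ^ q) M ^ (1/q) := p2
  have hfin := div_trick hT0 (Real.rpow_nonneg htgM _) (by positivity) key
  have hres := Real.rpow_le_rpow (Real.rpow_nonneg hT0 _) hfin (le_of_lt hq0)
  rw [← Real.rpow_mul hT0, ← Real.rpow_mul htgM, one_div, inv_mul_cancel₀ (ne_of_gt hq0),
    Real.rpow_one, Real.rpow_one] at hres
  rw [tg_of_psd hP.1]
  exact hres


/-- real-diagonal sandwich notation -/
noncomputable def dg (d : Fin n → ℝ) : Matrix (Fin n) (Fin n) ℂ :=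
  diagonal (fun i => (d i : ℂ))

lemma dg_congr {f g : Fin n → ℝ} (h : ∀ i, f i = g i) : dg (n := n) f = dg g := by
  have hfg : f = g := funext h
  rw [hfg]

lemma conj_mul_self {U : Matrix (Fin n) (Fin n) ℂ} (hU : U ∈ Matrix.unitaryGroup (Fin n) ℂ) :
    Uᴴ * U = 1 := by
  simpa [star_eq_conjTranspose] using (Matrix.mem_unitaryGroup_iff').mp hU

lemma self_mul_conj {U : Matrix (Fin n) (Fin n) ℂ} (hU : U ∈ Matrix.unitaryGroup (Fin n) ℂ) :
    U * Uᴴ = 1 := by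
  simpa [star_eq_conjTranspose] using (Matrix.mem_unitaryGroup_iff).mp hU

lemma sandwich_mul {U : Matrix (Fin n) (Fin n) ℂ} (hU : U ∈ Matrix.unitaryGroup (Fin n) ℂ)
    (f g : Fin n → ℝ) :
    (U * dg f * Uᴴ) * (U * dg g * Uᴴ) = U * dg (fun i => f i * g i) * Uᴴ := by
  have h : U * dg f * Uᴴ * (U * dg g * Uᴴ) = U * (dg f * (Uᴴ * U) * dg g) * Uᴴ := by
    simp only [Matrix.mul_assoc]
  rw [h, conj_mul_self hU, mul_one]
  unfold dg
  rw [diagonal_mul_diagonal]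
  congr 2
  ext i
  push_cast
  rfl

lemma sandwich_add (U : Matrix (Fin n) (Fin n) ℂ) (f g : Fin n → ℝ) :
    (U * dg f * Uᴴ) + (U * dg g * Uᴴ) = U * dg (fun i => f i + g i) * Uᴴ := by
  unfold dg
  rw [← Matrix.add_mul, ← Matrix.mul_add, diagonal_add]
  congr 2
  ext i
  push_cast
  rfl

lemma sandwich_sub (U : Matrix (Fin n) (Fin n) ℂ) (f g : Fin n → ℝ) :
    (U * dg f * Uᴴ) - (U * dg g * Uᴴ) = U * dg (fun i => f i - g i) * Uᴴ := by
  unfold dg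
  rw [← Matrix.sub_mul, ← Matrix.mul_sub, diagonal_sub]
  congr 2
  ext i
  push_cast
  rfl

lemma sandwich_smul (U : Matrix (Fin n) (Fin n) ℂ) (c : ℝ) (f : Fin n → ℝ) :
    (c : ℂ) • (U * dg f * Uᴴ) = U * dg (fun i => c * f i) * Uᴴ := by
  unfold dg
  rw [← smul_mul_assoc, ← mul_smul_comm, ← diagonal_smul]
  congr 2
  ext i
  push_cast
  rfl

lemma sandwich_one {U : Matrix (Fin n) (Fin n) ℂ} (hU : U ∈ Matrix.unitaryGroup (Fin n) ℂ) :
    U * dg (fun _ => 1) * Uᴴ = 1 := by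
  have h : dg (fun _ : Fin n => (1:ℝ)) = 1 := by
    unfold dg
    simp [diagonal_one]
  rw [h, mul_one, self_mul_conj hU]

lemma sandwich_psd {U : Matrix (Fin n) (Fin n) ℂ} (f : Fin n → ℝ) (hf : ∀ i, 0 ≤ f i) :
    (U * dg f * Uᴴ).PosSemidef := by
  have hd : (dg f).PosSemidef := by
    unfold dg
    rw [posSemidef_diagonal_iff]
    intro i
    rw [← Complex.ofReal_zero, Complex.real_le_real]
    exact hf i
  exact hd.mul_mul_conjTranspose_same U

lemma sandwich_herm (U : Matrix (Fin n) (Fin n) ℂ) (f : Fin n → ℝ) :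
    (U * dg f * Uᴴ).IsHermitian := isHermitian_conj_diagonal U f

lemma psd_smul_real {c : ℝ} (hc : 0 ≤ c) {P : Matrix (Fin n) (Fin n) ℂ}
    (hP : P.PosSemidef) : ((c : ℂ) • P).PosSemidef := by
  constructor
  · have h := hP.1
    unfold Matrix.IsHermitian at h ⊢
    rw [conjTranspose_smul, h]
    congr 1
    simp
  · exact (hP.smul (a := (c:ℂ)) (Complex.zero_le_real.mpr hc)).2

lemma tg_psd_nonneg {q : ℝ} {P : Matrix (Fin n) (Fin n) ℂ} (hP : P.PosSemidef) :
    0 ≤ tg (fun t => t ^ q) P := by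
  rw [tg_of_psd hP.1]
  exact Finset.sum_nonneg fun i _ => Real.rpow_nonneg (hP.eigenvalues_nonneg i) q

/-- tg of a unitary conjugation. -/
lemma tg_conj_unitary (g : ℝ → ℝ) {W M : Matrix (Fin n) (Fin n) ℂ}
    (hW : W ∈ Matrix.unitaryGroup (Fin n) ℂ) (hM : M.IsHermitian) :
    tg g (W * M * Wᴴ) = tg g M := by
  have hdec := spectral' hM
  have h1 : W * M * Wᴴ = (W * (hM.eigenvectorUnitary : Matrix (Fin n) (Fin n) ℂ))
      * diagonal (fun i => ((hM.eigenvalues i : ℝ) : ℂ))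
      * (W * (hM.eigenvectorUnitary : Matrix (Fin n) (Fin n) ℂ))ᴴ := by
    rw [conjTranspose_mul]
    conv_lhs => rw [hdec]
    simp only [Matrix.mul_assoc]
  rw [tg_eq_of_diag g (mul_mem hW hM.eigenvectorUnitary.2) hM.eigenvalues h1,
    tg_of_isHermitian g hM]

/-- tg of a nonneg scalar multiple of a PSD matrix. -/
lemma tg_smul {q c : ℝ} (hc : 0 ≤ c) {P : Matrix (Fin n) (Fin n) ℂ}
    (hP : P.PosSemidef) :
    tg (fun t => t ^ q) ((c : ℂ) • P) = c ^ q * tg (fun t => t ^ q) P := by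
  have hdec : P = (hP.1.eigenvectorUnitary : Matrix (Fin n) (Fin n) ℂ)
      * dg hP.1.eigenvalues
      * (hP.1.eigenvectorUnitary : Matrix (Fin n) (Fin n) ℂ)ᴴ := spectral' hP.1
  have h1 : (c : ℂ) • P = (hP.1.eigenvectorUnitary : Matrix (Fin n) (Fin n) ℂ)
      * diagonal (fun i => (((c * hP.1.eigenvalues i : ℝ)) : ℂ))
      * (hP.1.eigenvectorUnitary : Matrix (Fin n) (Fin n) ℂ)ᴴ := by
    conv_lhs => rw [hdec]
    rw [sandwich_smul]
    rfl
  rw [tg_eq_of_diag _ hP.1.eigenvectorUnitary.2 _ h1, tg_of_psd hP.1, Finset.mul_sum]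
  apply Finset.sum_congr rfl
  intro i _
  exact Real.mul_rpow hc (hP.eigenvalues_nonneg i)

/-- Key singular-value bound: if `±B ≼ R` then `∑ |eig B|^q ≤ ∑ eig(R)^q`. -/
lemma abs_eig_bound {q : ℝ} (hq : 2 ≤ q) {B R : Matrix (Fin n) (Fin n) ℂ}
    (hB : B.IsHermitian) (hR : R.PosSemidef)
    (h1 : (R - B).PosSemidef) (h2 : (R + B).PosSemidef) :
    ∑ i, |hB.eigenvalues i| ^ q ≤ tg (fun t => t ^ q) R := by
  have hq0 : (0:ℝ) < q := by linarith
  set U : Matrix (Fin n) (Fin n) ℂ := (hB.eigenvectorUnitary : Matrix (Fin n) (Fin n) ℂ) with hUdef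
  have hUm : U ∈ Matrix.unitaryGroup (Fin n) ℂ := hB.eigenvectorUnitary.2
  set e : Fin n → ℝ := hB.eigenvalues with hedef
  have hBdec : B = U * dg e * Uᴴ := spectral' hB
  set χ : Fin n → ℝ := fun i => if 0 ≤ e i then 1 else 0 with hχ
  set E : Matrix (Fin n) (Fin n) ℂ := U * dg χ * Uᴴ with hE
  have hEherm : E.IsHermitian := sandwich_herm U χ
  have hE1 : (1 : Matrix (Fin n) (Fin n) ℂ) - E = U * dg (fun i => 1 - χ i) * Uᴴ := by
    rw [hE, ← sandwich_one hUm, sandwich_sub]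
  have hE1herm : ((1 : Matrix (Fin n) (Fin n) ℂ) - E).IsHermitian := by
    rw [hE1]; exact sandwich_herm U _
  -- positive part
  have hEBE : E * B * E = U * dg (fun i => max (e i) 0) * Uᴴ := by
    rw [hE, hBdec, sandwich_mul hUm, sandwich_mul hUm]
    congr 2
    apply dg_congr
    intro i
    by_cases h : 0 ≤ e i
    · simp [hχ, if_pos h, max_eq_left h]
    · simp [hχ, if_neg h, max_eq_right (le_of_lt (not_le.mp h))]
  have hE1BE1 : ((1:Matrix (Fin n) (Fin n) ℂ) - E) * B * ((1:Matrix (Fin n) (Fin n) ℂ) - E)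
      = U * dg (fun i => - max (- e i) 0) * Uᴴ := by
    rw [hE1, hBdec, sandwich_mul hUm, sandwich_mul hUm]
    congr 2
    apply dg_congr
    intro i
    by_cases h : 0 ≤ e i
    · have hmx : max (- e i) 0 = 0 := max_eq_right (by linarith)
      simp [hχ, if_pos h, hmx]
    · have hmx : max (- e i) 0 = - e i := max_eq_left (by linarith [not_le.mp h])
      simp [hχ, if_neg h, hmx]
  -- |B|
  set absB : Matrix (Fin n) (Fin n) ℂ := U * dg (fun i => |e i|) * Uᴴ with habsB
  have habs_psd : absB.PosSemidef := sandwich_psd _ (fun i => abs_nonneg _)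
  -- M = E R E + (1-E) R (1-E)
  set M : Matrix (Fin n) (Fin n) ℂ :=
    E * R * E + ((1:Matrix (Fin n) (Fin n) ℂ) - E) * R * ((1:Matrix (Fin n) (Fin n) ℂ) - E)
    with hM
  have hERE : (E * R * E).PosSemidef := by
    have h := hR.mul_mul_conjTranspose_same E
    rwa [hEherm.eq] at h
  have hE1RE1 : (((1:Matrix (Fin n) (Fin n) ℂ) - E) * R
      * ((1:Matrix (Fin n) (Fin n) ℂ) - E)).PosSemidef := by
    have h := hR.mul_mul_conjTranspose_same ((1:Matrix (Fin n) (Fin n) ℂ) - E)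
    rwa [hE1herm.eq] at h
  have hMpsd : M.PosSemidef := hERE.add hE1RE1
  -- M - |B| is PSD
  have habs_split : absB = E * B * E - ((1:Matrix (Fin n) (Fin n) ℂ) - E) * B
      * ((1:Matrix (Fin n) (Fin n) ℂ) - E) := by
    rw [hEBE, hE1BE1, habsB, sandwich_sub]
    congr 2
    apply dg_congr
    intro i
    rcases le_total 0 (e i) with h | h
    · rw [_root_.abs_of_nonneg h, max_eq_left h, max_eq_right (by linarith)]
      ring
    · rw [_root_.abs_of_nonpos h, max_eq_right h, max_eq_left (by linarith)]
      ring
  have hMabs : (M - absB).PosSemidef := by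
    have key : M - absB = E * (R - B) * E + ((1:Matrix (Fin n) (Fin n) ℂ) - E) * (R + B)
        * ((1:Matrix (Fin n) (Fin n) ℂ) - E) := by
      rw [habs_split, hM]
      simp only [Matrix.mul_sub, Matrix.sub_mul, Matrix.mul_add, Matrix.add_mul,
        Matrix.one_mul, Matrix.mul_one]
      abel
    rw [key]
    have p1 : (E * (R - B) * E).PosSemidef := by
      have h := h1.mul_mul_conjTranspose_same E
      rwa [hEherm.eq] at h
    have p2 : (((1:Matrix (Fin n) (Fin n) ℂ) - E) * (R + B)
        * ((1:Matrix (Fin n) (Fin n) ℂ) - E)).PosSemidef := by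
      have h := h2.mul_mul_conjTranspose_same ((1:Matrix (Fin n) (Fin n) ℂ) - E)
      rwa [hE1herm.eq] at h
    exact p1.add p2
  -- step 1 : ∑ |e|^q = tg absB ≤ tg M
  have habs' : absB = U * diagonal (fun i => ((|e i| : ℝ) : ℂ)) * Uᴴ := habsB
  have step1 : ∑ i, |e i| ^ q ≤ tg (fun t => t ^ q) M := by
    have h := tg_mono hq habs_psd hMpsd hMabs
    rwa [tg_eq_of_diag _ hUm _ habs'] at h
  -- step 2 : tg M ≤ tg R via pinching
  have step2 : tg (fun t => t ^ q) M ≤ tg (fun t => t ^ q) R := by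
    set V : Matrix (Fin n) (Fin n) ℂ := U * dg (fun i => 2 * χ i - 1) * Uᴴ with hV
    have hVherm : V.IsHermitian := sandwich_herm U _
    have hVsq : V * V = 1 := by
      rw [hV, sandwich_mul hUm, ← sandwich_one hUm]
      congr 2
      apply dg_congr
      intro i
      by_cases h : 0 ≤ e i <;> simp [hχ, h] <;> norm_num
    have hVm : V ∈ Matrix.unitaryGroup (Fin n) ℂ := by
      rw [Matrix.mem_unitaryGroup_iff, star_eq_conjTranspose, hVherm.eq, hVsq]
    have hV2E : V = (2:ℝ) • E - 1 := by
      rw [hV, hE, ← sandwich_one hUm]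
      have hs := sandwich_smul U 2 χ
      rw [show ((2:ℝ):ℂ) = (2:ℂ) by norm_num] at hs
      rw [show ((2:ℝ) • (U * dg χ * Uᴴ) : Matrix (Fin n) (Fin n) ℂ)
        = (2:ℂ) • (U * dg χ * Uᴴ) by
          rw [← Complex.coe_smul]
          norm_num, hs, sandwich_sub]
    have hMhalf : M = ((1/2 : ℝ) : ℂ) • R + ((1/2 : ℝ) : ℂ) • (V * R * Vᴴ) := by
      rw [hVherm.eq, hV2E, hM]
      simp only [Matrix.mul_sub, Matrix.sub_mul, Matrix.mul_add, Matrix.add_mul,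
        Matrix.one_mul, Matrix.mul_one, smul_mul_assoc, mul_smul_comm]
      push_cast
      module
    have hVRV : (V * R * Vᴴ).PosSemidef := hR.mul_mul_conjTranspose_same V
    have hhalfR : (((1/2:ℝ):ℂ) • R).PosSemidef := psd_smul_real (by norm_num) hR
    have hhalfVRV : (((1/2:ℝ):ℂ) • (V * R * Vᴴ)).PosSemidef :=
      psd_smul_real (by norm_num) hVRV
    have htri := tri_psd hq hhalfR hhalfVRV
    rw [← hMhalf] at htri
    rw [tg_smul (by norm_num : (0:ℝ) ≤ 1/2) hR,
      tg_smul (by norm_num : (0:ℝ) ≤ 1/2) hVRV,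
      tg_conj_unitary _ hVm hR.1] at htri
    have hhalfpow : ∀ c : ℝ, 0 ≤ c → ((1/2:ℝ) ^ q * c) ^ (1/q) = (1/2) * c ^ (1/q) := by
      intro c hc
      rw [Real.mul_rpow (Real.rpow_nonneg (by norm_num) q) hc,
        ← Real.rpow_mul (by norm_num : (0:ℝ) ≤ 1/2), mul_one_div, div_self (ne_of_gt hq0),
        Real.rpow_one]
    rw [hhalfpow _ (tg_psd_nonneg hR), ← add_mul,
      show (1:ℝ)/2 + 1/2 = 1 by norm_num, one_mul] at htri
    -- htri : tg M ^ (1/q) ≤ tg R ^ (1/q)  (after arithmetic)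
    have hfin := Real.rpow_le_rpow (Real.rpow_nonneg (tg_psd_nonneg hMpsd) _) htri
      (le_of_lt hq0)
    rwa [← Real.rpow_mul (tg_psd_nonneg hMpsd), ← Real.rpow_mul (tg_psd_nonneg hR),
      one_div, inv_mul_cancel₀ (ne_of_gt hq0), Real.rpow_one, Real.rpow_one] at hfin
  calc ∑ i, |e i| ^ q ≤ tg (fun t => t ^ q) M := step1
    _ ≤ tg (fun t => t ^ q) R := step2




lemma schatten_eq_tg (p : ℝ) (A : Matrix (Fin n) (Fin n) ℂ) :
    schattenNorm p A = tg (fun t => t ^ (p/2)) (Aᴴ * A) ^ (1/p) := by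
  unfold schattenNorm
  rw [tg_of_psd (isHermitian_conjTranspose_mul_self A)]

lemma schatten_nonneg (p : ℝ) (A : Matrix (Fin n) (Fin n) ℂ) : 0 ≤ schattenNorm p A := by
  rw [schatten_eq_tg]
  exact Real.rpow_nonneg (tg_psd_nonneg (posSemidef_conjTranspose_mul_self A)) _

lemma rpow_rpow_inv {s r : ℝ} (hs : 0 ≤ s) (hr : r ≠ 0) : (s ^ r) ^ (1/r) = s := by
  rw [← Real.rpow_mul hs, mul_one_div, div_self hr, Real.rpow_one]

lemma rpow_inv_rpow {s r : ℝ} (hs : 0 ≤ s) (hr : r ≠ 0) : (s ^ (1/r)) ^ r = s := by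
  rw [← Real.rpow_mul hs, one_div, inv_mul_cancel₀ hr, Real.rpow_one]

lemma schatten_rpow {p : ℝ} (hp : 0 < p) (A : Matrix (Fin n) (Fin n) ℂ) :
    schattenNorm p A ^ p = tg (fun t => t ^ (p/2)) (Aᴴ * A) := by
  rw [schatten_eq_tg]
  exact rpow_inv_rpow (tg_psd_nonneg (posSemidef_conjTranspose_mul_self A)) (ne_of_gt hp)

lemma tg_fun_half_twoq {q : ℝ} (M : Matrix (Fin n) (Fin n) ℂ) :
    tg (fun t => t ^ ((2*q)/2)) M = tg (fun t => t ^ q) M := by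
  have h : (fun t : ℝ => t ^ ((2*q)/2)) = (fun t : ℝ => t ^ q) := by
    funext t
    congr 1
    ring
  rw [h]

lemma schatten_twoq_rpow {q : ℝ} (hq0 : 0 < q) (A : Matrix (Fin n) (Fin n) ℂ) :
    schattenNorm (2*q) A ^ (2*q) = tg (fun t => t ^ q) (Aᴴ * A) := by
  rw [schatten_rpow (by linarith) A, tg_fun_half_twoq]

lemma schatten_twoq_sq {q : ℝ} (hq0 : 0 < q) (A : Matrix (Fin n) (Fin n) ℂ) :
    schattenNorm (2*q) A ^ 2 = tg (fun t => t ^ q) (Aᴴ * A) ^ (1/q) := by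
  rw [schatten_eq_tg, tg_fun_half_twoq]
  rw [← Real.rpow_natCast (tg (fun t => t ^ q) (Aᴴ * A) ^ (1/(2*q))) 2,
    ← Real.rpow_mul (tg_psd_nonneg (posSemidef_conjTranspose_mul_self A))]
  congr 1
  push_cast
  field_simp

lemma conj_self_decomp {M : Matrix (Fin n) (Fin n) ℂ} (hM : M.IsHermitian) :
    Mᴴ * M = (hM.eigenvectorUnitary : Matrix (Fin n) (Fin n) ℂ)
      * diagonal (fun i => ((hM.eigenvalues i * hM.eigenvalues i : ℝ) : ℂ))
      * (hM.eigenvectorUnitary : Matrix (Fin n) (Fin n) ℂ)ᴴ := by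
  have hd : M = (hM.eigenvectorUnitary : Matrix (Fin n) (Fin n) ℂ) * dg hM.eigenvalues
      * (hM.eigenvectorUnitary : Matrix (Fin n) (Fin n) ℂ)ᴴ := spectral' hM
  rw [hM.eq]
  conv_lhs => rw [hd]
  rw [sandwich_mul hM.eigenvectorUnitary.2]
  rfl

lemma schatten_psd_pow {q : ℝ} (hq0 : 0 < q) {P : Matrix (Fin n) (Fin n) ℂ}
    (hP : P.PosSemidef) :
    schattenNorm q P ^ q = tg (fun t => t ^ q) P := by
  rw [schatten_rpow hq0]
  rw [tg_eq_of_diag _ hP.1.eigenvectorUnitary.2 _ (conj_self_decomp hP.1), tg_of_psd hP.1]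
  apply Finset.sum_congr rfl
  intro i _
  have he := hP.eigenvalues_nonneg i
  have h2 : hP.1.eigenvalues i * hP.1.eigenvalues i = hP.1.eigenvalues i ^ (2:ℝ) := by
    rw [show (2:ℝ) = ((2:ℕ):ℝ) by norm_num, Real.rpow_natCast]
    ring
  rw [h2, ← Real.rpow_mul he]
  congr 1
  ring

lemma schatten_psd_eq {q : ℝ} (hq0 : 0 < q) {P : Matrix (Fin n) (Fin n) ℂ}
    (hP : P.PosSemidef) :
    schattenNorm q P = tg (fun t => t ^ q) P ^ (1/q) := by
  rw [← schatten_psd_pow hq0 hP, rpow_rpow_inv (schatten_nonneg q P) (ne_of_gt hq0)]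

lemma schatten_herm_pow {q : ℝ} (hq0 : 0 < q) {B : Matrix (Fin n) (Fin n) ℂ}
    (hB : B.IsHermitian) :
    schattenNorm q B ^ q = ∑ i, |hB.eigenvalues i| ^ q := by
  rw [schatten_rpow hq0]
  rw [tg_eq_of_diag _ hB.eigenvectorUnitary.2 _ (conj_self_decomp hB)]
  apply Finset.sum_congr rfl
  intro i _
  have h2 : hB.eigenvalues i * hB.eigenvalues i = |hB.eigenvalues i| ^ (2:ℝ) := by
    rw [show (2:ℝ) = ((2:ℕ):ℝ) by norm_num, Real.rpow_natCast]
    rw [← abs_mul_abs_self]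
    ring
  rw [h2, ← Real.rpow_mul (abs_nonneg _)]
  congr 1
  ring

lemma tg_zero {q : ℝ} (hq : q ≠ 0) :
    tg (fun t => t ^ q) (0 : Matrix (Fin n) (Fin n) ℂ) = 0 := by
  have h0 : (0 : Matrix (Fin n) (Fin n) ℂ)
      = 1 * diagonal (fun _ : Fin n => (((0:ℝ)) : ℂ)) * (1 : Matrix (Fin n) (Fin n) ℂ)ᴴ := by
    simp
  have h1 : (1 : Matrix (Fin n) (Fin n) ℂ) ∈ Matrix.unitaryGroup (Fin n) ℂ := by
    rw [Matrix.mem_unitaryGroup_iff]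
    simp
  rw [tg_eq_of_diag _ h1 _ h0]
  simp [Real.zero_rpow hq]

lemma schatten_zero {p : ℝ} (hp : 0 < p) :
    schattenNorm p (0 : Matrix (Fin n) (Fin n) ℂ) = 0 := by
  rw [schatten_eq_tg]
  rw [show (0 : Matrix (Fin n) (Fin n) ℂ)ᴴ * 0 = 0 by simp]
  rw [tg_zero (by positivity : p/2 ≠ 0)]
  exact Real.zero_rpow (by positivity)

lemma schatten_pos {p : ℝ} (hp : 0 < p) {A : Matrix (Fin n) (Fin n) ℂ} (hA : A ≠ 0) :
    0 < schattenNorm p A := by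
  rw [schatten_eq_tg]
  apply Real.rpow_pos_of_pos
  have hK : (Aᴴ * A).PosSemidef := posSemidef_conjTranspose_mul_self A
  rw [tg_of_psd hK.1]
  have hne : ∃ i, hK.1.eigenvalues i ≠ 0 := by
    by_contra hno
    push_neg at hno
    have hz : Aᴴ * A = 0 := by
      have hsp := spectral' hK.1
      rw [hsp]
      have hzero : (fun i => ((hK.1.eigenvalues i : ℝ) : ℂ)) = fun _ => (0:ℂ) :=
        funext fun i => by rw [hno i]; simp
      rw [hzero]
      simp [Matrix.diagonal_zero]
    exact hA (Matrix.conjTranspose_mul_self_eq_zero.mp hz)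
  obtain ⟨i, hi⟩ := hne
  apply Finset.sum_pos'
  · exact fun j _ => Real.rpow_nonneg (hK.eigenvalues_nonneg j) _
  · exact ⟨i, Finset.mem_univ i,
      Real.rpow_pos_of_pos (lt_of_le_of_ne (hK.eigenvalues_nonneg i) (Ne.symm hi)) _⟩

lemma rpow_scale {c τ q : ℝ} (hq : 0 < q) (hc : 0 ≤ c) (hτ : 0 ≤ τ) :
    (c ^ q * τ) ^ (1/q) = c * τ ^ (1/q) := by
  rw [Real.mul_rpow (Real.rpow_nonneg hc q) hτ, rpow_rpow_inv hc (ne_of_gt hq)]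


lemma normA_bound {q μ : ℝ} (hq : 2 ≤ q) (hμ0 : 0 < μ) (X Y : Matrix (Fin n) (Fin n) ℂ) :
    schattenNorm q (Xᴴ * X + ((μ:ℝ):ℂ) • (Yᴴ * Y))
      ≤ schattenNorm (2*q) X ^ 2 + μ * schattenNorm (2*q) Y ^ 2 := by
  have hq0 : (0:ℝ) < q := by linarith
  have hK := posSemidef_conjTranspose_mul_self X
  have hL := posSemidef_conjTranspose_mul_self Y
  have hμL := psd_smul_real hμ0.le hL
  rw [schatten_psd_eq hq0 (hK.add hμL), schatten_twoq_sq hq0, schatten_twoq_sq hq0]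
  have htri := tri_psd hq hK hμL
  rw [tg_smul hμ0.le hL, rpow_scale hq0 hμ0.le (tg_psd_nonneg hL)] at htri
  exact htri

lemma normB_bound {q μ : ℝ} (hq : 2 ≤ q) (hμ0 : 0 < μ) (hμ1 : μ ≤ 1)
    (X Y : Matrix (Fin n) (Fin n) ℂ) :
    schattenNorm q (Xᴴ * Y + Yᴴ * X + ((1 - μ : ℝ) : ℂ) • (Yᴴ * Y))
      ≤ 2 * schattenNorm (2*q) X * schattenNorm (2*q) Y
        + (1 - μ) * schattenNorm (2*q) Y ^ 2 := by
  have hq0 : (0:ℝ) < q := by linarith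
  have hL := posSemidef_conjTranspose_mul_self Y
  have hK := posSemidef_conjTranspose_mul_self X
  set x := schattenNorm (2*q) X with hx
  set y := schattenNorm (2*q) Y with hy
  have hx0 : 0 ≤ x := schatten_nonneg _ _
  have hy0 : 0 ≤ y := schatten_nonneg _ _
  set B : Matrix (Fin n) (Fin n) ℂ := Xᴴ * Y + Yᴴ * X + ((1 - μ : ℝ) : ℂ) • (Yᴴ * Y) with hB
  have hBh : B.IsHermitian := by
    rw [hB]
    unfold Matrix.IsHermitian
    simp only [conjTranspose_add, conjTranspose_smul, conjTranspose_mul,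
      conjTranspose_conjTranspose, Complex.star_def, Complex.conj_ofReal]
    abel
  have hRHS0 : 0 ≤ 2 * x * y + (1 - μ) * y ^ 2 :=
    add_nonneg (mul_nonneg (mul_nonneg (by norm_num) hx0) hy0)
      (mul_nonneg (by linarith) (sq_nonneg y))
  suffices h : ∃ R : Matrix (Fin n) (Fin n) ℂ, R.PosSemidef ∧ (R - B).PosSemidef
      ∧ (R + B).PosSemidef ∧ tg (fun t => t ^ q) R ^ (1/q) ≤ 2 * x * y + (1-μ) * y^2 by
    obtain ⟨R, hR, h1, h2, hbound⟩ := h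
    have habs := abs_eig_bound hq hBh hR h1 h2
    have hs : schattenNorm q B = (∑ i, |hBh.eigenvalues i| ^ q) ^ (1/q) := by
      rw [← schatten_herm_pow hq0 hBh, rpow_rpow_inv (schatten_nonneg _ _) (ne_of_gt hq0)]
    rw [hs]
    refine le_trans (Real.rpow_le_rpow
      (Finset.sum_nonneg fun i _ => Real.rpow_nonneg (abs_nonneg _) q) habs
      (by positivity)) hbound
  by_cases hY : Y = 0
  · have hB0 : B = 0 := by
      rw [hB, hY]
      simp
    refine ⟨0, Matrix.PosSemidef.zero, ?_, ?_, ?_⟩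
    · rw [hB0, sub_zero]; exact Matrix.PosSemidef.zero
    · rw [hB0, add_zero]; exact Matrix.PosSemidef.zero
    · rw [tg_zero (ne_of_gt hq0), Real.zero_rpow (by positivity)]
      exact hRHS0
  by_cases hX : X = 0
  · have hBeq : B = ((1 - μ : ℝ) : ℂ) • (Yᴴ * Y) := by
      rw [hB, hX]
      simp
    have hRpsd : (((1 - μ : ℝ) : ℂ) • (Yᴴ * Y)).PosSemidef := psd_smul_real (by linarith) hL
    refine ⟨((1 - μ : ℝ) : ℂ) • (Yᴴ * Y), hRpsd, ?_, ?_, ?_⟩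
    · rw [hBeq, sub_self]; exact Matrix.PosSemidef.zero
    · rw [hBeq]; exact hRpsd.add hRpsd
    · rw [tg_smul (by linarith : (0:ℝ) ≤ 1 - μ) hL,
        rpow_scale hq0 (by linarith) (tg_psd_nonneg hL), ← schatten_twoq_sq hq0 Y]
      have h2xy : 0 ≤ 2 * x * y := mul_nonneg (mul_nonneg (by norm_num) hx0) hy0
      linarith
  -- main case
  have hxpos : 0 < x := schatten_pos (by linarith) hX
  have hypos : 0 < y := schatten_pos (by linarith) hY
  set t : ℝ := y / x with ht
  have htpos : 0 < t := div_pos hypos hxpos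
  have htinv : 0 < t⁻¹ := inv_pos.mpr htpos
  set c2 : ℝ := t⁻¹ + (1 - μ) with hc2def
  have hc2 : 0 ≤ c2 := by
    rw [hc2def]
    linarith
  have htc : (t:ℂ) ≠ 0 := Complex.ofReal_ne_zero.mpr (ne_of_gt htpos)
  set R : Matrix (Fin n) (Fin n) ℂ := ((t:ℝ):ℂ) • (Xᴴ * X) + ((c2:ℝ):ℂ) • (Yᴴ * Y) with hR
  have hRpsd : R.PosSemidef := (psd_smul_real htpos.le hK).add (psd_smul_real hc2 hL)
  have hZ1 : R - B = ((t⁻¹:ℝ):ℂ) • ((((t:ℝ):ℂ) • X - Y)ᴴ * (((t:ℝ):ℂ) • X - Y)) := by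
    rw [hR, hB, hc2def]
    simp only [conjTranspose_sub, conjTranspose_add, conjTranspose_smul, conjTranspose_mul,
      conjTranspose_conjTranspose, Complex.star_def, Complex.conj_ofReal,
      Matrix.sub_mul, Matrix.mul_sub, Matrix.add_mul, Matrix.mul_add,
      smul_mul_assoc, mul_smul_comm, smul_smul, smul_sub, smul_add]
    match_scalars <;> (push_cast; field_simp [htc]) <;> try ring
  have hZ2 : R + B = ((t⁻¹:ℝ):ℂ) • ((((t:ℝ):ℂ) • X + Y)ᴴ * (((t:ℝ):ℂ) • X + Y))
      + ((2*(1-μ):ℝ):ℂ) • (Yᴴ * Y) := by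
    rw [hR, hB, hc2def]
    simp only [conjTranspose_sub, conjTranspose_add, conjTranspose_smul, conjTranspose_mul,
      conjTranspose_conjTranspose, Complex.star_def, Complex.conj_ofReal,
      Matrix.sub_mul, Matrix.mul_sub, Matrix.add_mul, Matrix.mul_add,
      smul_mul_assoc, mul_smul_comm, smul_smul, smul_sub, smul_add]
    match_scalars <;> (push_cast; field_simp [htc]) <;> try ring
  refine ⟨R, hRpsd, ?_, ?_, ?_⟩
  · rw [hZ1]
    exact psd_smul_real htinv.le (posSemidef_conjTranspose_mul_self _)
  · rw [hZ2]
    exact (psd_smul_real htinv.le (posSemidef_conjTranspose_mul_self _)).add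
      (psd_smul_real (by linarith) hL)
  · have htri := tri_psd hq (psd_smul_real htpos.le hK) (psd_smul_real hc2 hL)
    rw [← hR] at htri
    rw [tg_smul htpos.le hK, tg_smul hc2 hL,
      rpow_scale hq0 htpos.le (tg_psd_nonneg hK),
      rpow_scale hq0 hc2 (tg_psd_nonneg hL),
      ← schatten_twoq_sq hq0 X, ← schatten_twoq_sq hq0 Y] at htri
    have harith : t * x^2 + c2 * y^2 = 2*x*y + (1-μ)*y^2 := by
      have hx' : x ≠ 0 := ne_of_gt hxpos
      have hy' : y ≠ 0 := ne_of_gt hypos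
      rw [ht, hc2def, inv_div]
      field_simp
      ring
    rw [harith] at htri
    exact htri


lemma scalar_key {x y C μ : ℝ} (hx : 0 ≤ x) (hy : 0 ≤ y) (hC : 0 ≤ C) (hμ0 : 0 < μ)
    (hμ1 : μ ≤ 1) :
    (x^2 + μ*y^2)^2 + C*(2*x*y + (1-μ)*y^2)^2 ≤ (x^2 + (2*C+1)*y^2)^2 := by
  nlinarith [mul_nonneg (mul_nonneg (sub_nonneg.mpr hμ1) (sq_nonneg y)) (sq_nonneg (x - C*y)),
    mul_nonneg (mul_nonneg hC hμ0.le) (sq_nonneg (y*y)),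
    mul_nonneg (mul_nonneg (mul_nonneg hC hC) hμ0.le) (sq_nonneg (y*y)),
    mul_nonneg (mul_nonneg hμ0.le (sub_nonneg.mpr hμ1)) (sq_nonneg (y*y)),
    mul_nonneg (mul_nonneg (mul_nonneg hC hμ0.le) (sub_nonneg.mpr hμ1)) (sq_nonneg (y*y)),
    mul_nonneg hC (sq_nonneg (y*y)), sq_nonneg (y*y), mul_nonneg hx hy]

end SchattenAux

open SchattenAux in
open scoped ComplexOrder in
/-- doubling the exponent in the asymmetric convexity inequality. -/
theorem stmt2 {n : ℕ} (q lam Cq : ℝ) (hq : 2 ≤ q) (hl0 : 0 < lam) (hl1 : lam ≤ 1 / 2)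
    (hC : 0 ≤ Cq)
    (hyp : ∀ X Y : Matrix (Fin n) (Fin n) ℂ,
      (lam * schattenNorm q (X + Y) ^ q
        + (1 - lam) * schattenNorm q (X - ((lam / (1 - lam) : ℝ) : ℂ) • Y) ^ q) ^ (2 / q)
        ≤ schattenNorm q X ^ 2 + Cq * schattenNorm q Y ^ 2) :
    ∀ X Y : Matrix (Fin n) (Fin n) ℂ,
      (lam * schattenNorm (2 * q) (X + Y) ^ (2 * q)
        + (1 - lam) * schattenNorm (2 * q) (X - ((lam / (1 - lam) : ℝ) : ℂ) • Y) ^ (2 * q)) ^ (1 / q)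
        ≤ schattenNorm (2 * q) X ^ 2 + (2 * Cq + 1) * schattenNorm (2 * q) Y ^ 2 := by
  intro X Y
  have hq0 : (0:ℝ) < q := by linarith
  have h1l : (0:ℝ) < 1 - lam := by linarith
  set μ : ℝ := lam / (1 - lam) with hμdef
  have hμ0 : 0 < μ := div_pos hl0 h1l
  have hμ1 : μ ≤ 1 := by
    rw [hμdef, div_le_one h1l]
    linarith
  -- the two auxiliary matrices
  have H := hyp (Xᴴ * X + ((μ:ℝ):ℂ) • (Yᴴ * Y))
    (Xᴴ * Y + Yᴴ * X + ((1 - μ : ℝ):ℂ) • (Yᴴ * Y))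
  have hAB1 : (Xᴴ * X + ((μ:ℝ):ℂ) • (Yᴴ * Y))
      + (Xᴴ * Y + Yᴴ * X + ((1 - μ : ℝ):ℂ) • (Yᴴ * Y)) = (X + Y)ᴴ * (X + Y) := by
    simp only [conjTranspose_add, Matrix.add_mul, Matrix.mul_add]
    match_scalars <;> (push_cast; ring)
  have hAB2 : (Xᴴ * X + ((μ:ℝ):ℂ) • (Yᴴ * Y))
      - ((μ:ℝ):ℂ) • (Xᴴ * Y + Yᴴ * X + ((1 - μ : ℝ):ℂ) • (Yᴴ * Y))
      = (X - ((μ:ℝ):ℂ) • Y)ᴴ * (X - ((μ:ℝ):ℂ) • Y) := by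
    simp only [conjTranspose_sub, conjTranspose_smul, Complex.star_def, Complex.conj_ofReal,
      Matrix.sub_mul, Matrix.mul_sub, smul_mul_assoc, mul_smul_comm, smul_smul, smul_add,
      smul_sub]
    match_scalars <;> (push_cast; ring)
  rw [hAB1, hAB2] at H
  rw [schatten_psd_pow hq0 (posSemidef_conjTranspose_mul_self (X + Y)),
    schatten_psd_pow hq0 (posSemidef_conjTranspose_mul_self (X - ((μ:ℝ):ℂ) • Y))] at H
  rw [schatten_twoq_rpow hq0 (X + Y), schatten_twoq_rpow hq0 (X - ((μ:ℝ):ℂ) • Y)]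
  set x := schattenNorm (2 * q) X with hxdef
  set y := schattenNorm (2 * q) Y with hydef
  have hx0 : 0 ≤ x := schatten_nonneg _ _
  have hy0 : 0 ≤ y := schatten_nonneg _ _
  set W : ℝ := lam * tg (fun t => t ^ q) ((X + Y)ᴴ * (X + Y))
    + (1 - lam) * tg (fun t => t ^ q) ((X - ((μ:ℝ):ℂ) • Y)ᴴ * (X - ((μ:ℝ):ℂ) • Y)) with hWdef
  have hW0 : 0 ≤ W := add_nonneg
    (mul_nonneg hl0.le (tg_psd_nonneg (posSemidef_conjTranspose_mul_self _)))
    (mul_nonneg (by linarith) (tg_psd_nonneg (posSemidef_conjTranspose_mul_self _)))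
  -- bounds for A and B
  have hnA := normA_bound hq hμ0 X Y
  have hnB := normB_bound hq hμ0 hμ1 X Y
  have hH2 : W ^ ((2:ℝ)/q) ≤ (x^2 + μ*y^2)^2 + Cq*(2*x*y + (1-μ)*y^2)^2 := by
    refine le_trans H (add_le_add ?_ ?_)
    · exact pow_le_pow_left₀ (schatten_nonneg _ _) hnA 2
    · exact mul_le_mul_of_nonneg_left (pow_le_pow_left₀ (schatten_nonneg _ _) hnB 2) hC
  have hRb := scalar_key hx0 hy0 hC hμ0 hμ1
  have hfinal0 : (0:ℝ) ≤ x^2 + (2*Cq+1)*y^2 :=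
    add_nonneg (sq_nonneg x) (mul_nonneg (by linarith) (sq_nonneg y))
  have hWW : W ^ ((1:ℝ)/q) = (W ^ ((2:ℝ)/q)) ^ ((1:ℝ)/2) := by
    rw [← Real.rpow_mul hW0]
    congr 1
    ring
  rw [hWW]
  refine le_trans (Real.rpow_le_rpow (Real.rpow_nonneg hW0 _) (le_trans hH2 hRb)
    (by norm_num : (0:ℝ) ≤ 1/2)) ?_
  rw [← Real.rpow_natCast (x^2 + (2*Cq+1)*y^2) 2, ← Real.rpow_mul hfinal0,
    show ((2:ℕ):ℝ)*(1/2) = 1 by norm_num, Real.rpow_one]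
end

section
/- Let μ ≥ 1, λ = 1/(1+μ⁴), t ≥ 0. Then the 4×4 Choi matrix C with diagonal entries λ(1+e^{-2t}μ⁴), λ(1-e^{-2t}), (1-λ)(1-e^{-2t}), (1-λ)(1+e^{-2t}μ^{-4}) and off-diagonal entries C_{14} = C_{41} = e^{-t} (all other entries zero) is positive semidefinite. -/
open Matrix Real

/-- positivity of the Choi matrix of the one-site Ornstein-Uhlenbeck map. -/
theorem stmt6 (μ t : ℝ) (hμ : 1 ≤ μ) (ht : 0 ≤ t) (lam : ℝ) (hlam : lam = 1 / (1 + μ ^ 4)) :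
    let C : Matrix (Fin 4) (Fin 4) ℝ :=
      !![lam * (1 + Real.exp (-2 * t) * μ ^ 4), 0, 0, Real.exp (-t);
         0, lam * (1 - Real.exp (-2 * t)), 0, 0;
         0, 0, (1 - lam) * (1 - Real.exp (-2 * t)), 0;
         Real.exp (-t), 0, 0, (1 - lam) * (1 + Real.exp (-2 * t) * (μ ^ 4)⁻¹)]
    C.PosSemidef := by
  intro C
  have hμ0 : (0:ℝ) < μ := lt_of_lt_of_le one_pos hμ
  have hμ4 : (1:ℝ) ≤ μ ^ 4 := one_le_pow₀ hμ
  have hμ4' : (0:ℝ) < μ ^ 4 := by positivity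
  have hden : (0:ℝ) < 1 + μ ^ 4 := by linarith
  have hlam0 : 0 < lam := by rw [hlam]; positivity
  have hlam1 : lam < 1 := by
    rw [hlam, div_lt_one hden]; linarith
  set e := Real.exp (-t) with he
  have he0 : 0 < e := Real.exp_pos _
  have he1 : e ≤ 1 := by
    rw [he]; exact Real.exp_le_one_iff.mpr (by linarith)
  have he2 : e ^ 2 ≤ 1 := by nlinarith
  have hsq : Real.exp (-2 * t) = e ^ 2 := by
    rw [he, ← Real.exp_nat_mul]; ring_nf
  have hsq' : Real.exp (-(2 * t)) = e ^ 2 := by rw [← hsq]; ring_nf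
  rw [Matrix.posSemidef_iff_dotProduct_mulVec]
  constructor
  · show Cᴴ = C
    ext i j
    fin_cases i <;> fin_cases j <;> simp [C, Matrix.vecHead, Matrix.vecTail]
  · intro x
    set A := lam * (1 + e ^ 2 * μ ^ 4) with hA
    set D := (1 - lam) * (1 + e ^ 2 * (μ ^ 4)⁻¹) with hD
    have hApos : 0 < A := by
      rw [hA]; exact mul_pos hlam0 (by positivity)
    have key : A * D - e ^ 2 = μ ^ 4 * (1 - e ^ 2) ^ 2 / (1 + μ ^ 4) ^ 2 := by
      rw [hA, hD, hlam]
      field_simp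
      ring
    have hkey' : 0 ≤ A * D - e ^ 2 := by rw [key]; positivity
    have h1 : 0 ≤ lam * (1 - e ^ 2) := mul_nonneg hlam0.le (by linarith)
    have h2 : 0 ≤ (1 - lam) * (1 - e ^ 2) := mul_nonneg (by linarith) (by linarith)
    have hX : 0 ≤ A * x 0 ^ 2 + 2 * e * x 0 * x 3 + D * x 3 ^ 2 := by
      by_contra hcon
      push_neg at hcon
      nlinarith [sq_nonneg (A * x 0 + e * x 3), mul_nonneg hkey' (sq_nonneg (x 3)),
        mul_pos hApos (neg_pos.mpr hcon)]
    simp [C, hsq, hsq', ← he, dotProduct, Matrix.mulVec, Fin.sum_univ_four, Matrix.vecHead,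
      Matrix.vecTail]
    nlinarith [hX, mul_nonneg h1 (sq_nonneg (x 1)), mul_nonneg h2 (sq_nonneg (x 2))]
end

section
/- Let T be the linear map on 2×2 complex matrices determined by T(e_{12}) = e^{-t}e_{12}, T(e_{21}) = e^{-t}e_{21}, T(I) = I and T(μ²e_{11} - μ^{-2}e_{22}) = e^{-2t}(μ²e_{11} - μ^{-2}e_{22}), where μ ≥ 1 and t ≥ 0. Then T(e_{11}) = λ(1+e^{-2t}μ⁴)e_{11} + λ(1-e^{-2t})e_{22} and T(e_{22}) = (1-λ)(1-e^{-2t})e_{11} + (1-λ)(1+e^{-2t}μ^{-4})e_{22}, with λ = 1/(1+μ⁴), and T is completely positive. -/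
open Matrix ComplexOrder

def Lmat (x y z u v : ℂ) : Matrix (Fin 2 × Fin 2) (Fin 2 × Fin 2) ℂ :=
  Matrix.of fun p q =>
    if p = (0,0) then (if q = (0,0) then x else if q = (1,1) then y else 0)
    else if p = (1,1) then (if q = (1,1) then z else 0)
    else if p = (0,1) then (if q = (0,1) then u else 0)
    else if p = (1,0) then (if q = (1,0) then v else 0)
    else 0

set_option maxHeartbeats 2000000 in
/-- the one-site Ornstein-Uhlenbeck map on `M₂(ℂ)`: values on matrix units
and complete positivity (positivity of the Choi matrix). -/
theorem stmt8 (μ t : ℝ) (hμ : 1 ≤ μ) (ht : 0 ≤ t) (lam : ℝ) (hlam : lam = 1 / (1 + μ ^ 4))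
    (T : Matrix (Fin 2) (Fin 2) ℂ →ₗ[ℂ] Matrix (Fin 2) (Fin 2) ℂ)
    (h12 : T (Matrix.single 0 1 1) =
      (Real.exp (-t) : ℂ) • Matrix.single 0 1 1)
    (h21 : T (Matrix.single 1 0 1) =
      (Real.exp (-t) : ℂ) • Matrix.single 1 0 1)
    (hI : T 1 = 1)
    (hdiag : T (((μ : ℂ) ^ 2) • Matrix.single 0 0 1
        - ((μ : ℂ) ^ 2)⁻¹ • Matrix.single 1 1 1) =
      (Real.exp (-2 * t) : ℂ) • (((μ : ℂ) ^ 2) • Matrix.single 0 0 1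
        - ((μ : ℂ) ^ 2)⁻¹ • Matrix.single 1 1 1)) :
    T (Matrix.single 0 0 1) =
        ((lam * (1 + Real.exp (-2 * t) * μ ^ 4) : ℝ) : ℂ) • Matrix.single 0 0 1
          + ((lam * (1 - Real.exp (-2 * t)) : ℝ) : ℂ) • Matrix.single 1 1 1 ∧
      T (Matrix.single 1 1 1) =
        (((1 - lam) * (1 - Real.exp (-2 * t)) : ℝ) : ℂ) • Matrix.single 0 0 1
          + (((1 - lam) * (1 + Real.exp (-2 * t) * (μ ^ 4)⁻¹) : ℝ) : ℂ) •
              Matrix.single 1 1 1 ∧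
      (Matrix.of fun (p q : Fin 2 × Fin 2) =>
        T (Matrix.single p.1 q.1 1) p.2 q.2).PosSemidef := by
  have hμ0 : (0:ℝ) < μ := lt_of_lt_of_le one_pos hμ
  have hμc : (μ:ℂ) ≠ 0 := by exact_mod_cast hμ0.ne'
  have hP : (0:ℝ) < 1 + μ ^ 4 := by positivity
  have hPc : (1 + (μ:ℂ)^4) ≠ 0 := by
    have : ((1 + μ^4 : ℝ) : ℂ) ≠ 0 := by exact_mod_cast hP.ne'
    push_cast at this; exact this
  have hlamc : (lam : ℂ) = 1 / (1 + (μ:ℂ)^4) := by rw [hlam]; push_cast; ring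
  -- decompositions of e11, e22
  have he11 : Matrix.single (0:Fin 2) 0 (1:ℂ) =
      (((μ:ℂ)^2 + ((μ:ℂ)^2)⁻¹)⁻¹) • ((((μ:ℂ)^2)⁻¹) • (1 : Matrix (Fin 2) (Fin 2) ℂ)
        + (((μ:ℂ)^2) • Matrix.single 0 0 1 - ((μ:ℂ)^2)⁻¹ • Matrix.single 1 1 1)) := by
    ext i j
    fin_cases i <;> fin_cases j <;>
      simp [Matrix.one_apply, Matrix.single, Matrix.smul_apply] <;>
      field_simp <;> ring
  have he22 : Matrix.single (1:Fin 2) 1 (1:ℂ) =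
      (((μ:ℂ)^2 + ((μ:ℂ)^2)⁻¹)⁻¹) • ((((μ:ℂ)^2)) • (1 : Matrix (Fin 2) (Fin 2) ℂ)
        - (((μ:ℂ)^2) • Matrix.single 0 0 1 - ((μ:ℂ)^2)⁻¹ • Matrix.single 1 1 1)) := by
    ext i j
    fin_cases i <;> fin_cases j <;>
      simp [Matrix.one_apply, Matrix.single, Matrix.smul_apply] <;>
      field_simp <;> ring
  have hT11 : T (Matrix.single 0 0 1) =
      ((lam * (1 + Real.exp (-2 * t) * μ ^ 4) : ℝ) : ℂ) • Matrix.single 0 0 1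
        + ((lam * (1 - Real.exp (-2 * t)) : ℝ) : ℂ) • Matrix.single 1 1 1 := by
    conv_lhs => rw [he11, _root_.map_smul, map_add, _root_.map_smul, hI, hdiag]
    ext i j
    fin_cases i <;> fin_cases j <;>
      simp [Matrix.one_apply, Matrix.single, Matrix.smul_apply] <;>
      push_cast <;> rw [hlamc] <;> field_simp <;> ring
  have hT22 : T (Matrix.single 1 1 1) =
      (((1 - lam) * (1 - Real.exp (-2 * t)) : ℝ) : ℂ) • Matrix.single 0 0 1
        + (((1 - lam) * (1 + Real.exp (-2 * t) * (μ ^ 4)⁻¹) : ℝ) : ℂ) •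
            Matrix.single 1 1 1 := by
    conv_lhs => rw [he22, _root_.map_smul, map_sub, _root_.map_smul, hI, hdiag]
    ext i j
    fin_cases i <;> fin_cases j <;>
      simp [Matrix.one_apply, Matrix.single, Matrix.smul_apply] <;>
      push_cast <;> rw [hlamc] <;> field_simp <;> ring
  refine ⟨hT11, hT22, ?_⟩
  set E := Real.exp (-2 * t) with hEdef
  set r := Real.exp (-t) with hrdef
  have hr0 : 0 < r := Real.exp_pos _
  have hrE : r ^ 2 = E := by rw [hrdef, hEdef, sq, ← Real.exp_add]; ring_nf
  have hE0 : 0 < E := Real.exp_pos _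
  have hE1 : E ≤ 1 := by
    rw [hEdef]; apply Real.exp_le_one_iff.mpr; nlinarith
  have hμ4 : (0:ℝ) < μ ^ 4 := by positivity
  have hlam0 : 0 < lam := by rw [hlam]; positivity
  have hlam1 : lam < 1 := by
    rw [hlam]; rw [div_lt_one hP]; nlinarith
  set a := lam * (1 + E * μ ^ 4) with hadef
  set b := lam * (1 - E) with hbdef
  set c := (1 - lam) * (1 - E) with hcdef
  set d := (1 - lam) * (1 + E * (μ ^ 4)⁻¹) with hddef
  have ha : 0 < a := mul_pos hlam0 (by positivity)
  have hb : 0 ≤ b := mul_nonneg hlam0.le (by linarith)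
  have hc : 0 ≤ c := mul_nonneg (by linarith) (by linarith)
  have hd : 0 < d := mul_pos (by linarith) (by positivity)
  -- key inequality : r^2 ≤ a*d
  have hlam' : lam * (1 + μ ^ 4) = 1 := by rw [hlam]; field_simp
  have hinv : μ ^ 4 * (μ ^ 4)⁻¹ = 1 := mul_inv_cancel₀ hμ4.ne'
  have had : a * (1 + μ ^ 4) = 1 + E * μ ^ 4 := by
    rw [hadef]; linear_combination (1 + E * μ ^ 4) * hlam'
  have hdd : d * (1 + μ ^ 4) = μ ^ 4 + E := by
    rw [hddef]
    have h1 : (1 - lam) * (1 + μ ^ 4) = μ ^ 4 := by linear_combination -hlam'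
    calc (1 - lam) * (1 + E * (μ ^ 4)⁻¹) * (1 + μ ^ 4)
        = (1 - lam) * (1 + μ ^ 4) * (1 + E * (μ ^ 4)⁻¹) := by ring
      _ = μ ^ 4 * (1 + E * (μ ^ 4)⁻¹) := by rw [h1]
      _ = μ ^ 4 + E * (μ ^ 4 * (μ ^ 4)⁻¹) := by ring
      _ = μ ^ 4 + E := by rw [hinv]; ring
  have hkey : r ^ 2 ≤ a * d := by
    have h2 : a * d * ((1 + μ ^ 4) * (1 + μ ^ 4)) = (1 + E * μ ^ 4) * (μ ^ 4 + E) := by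
      calc a * d * ((1 + μ ^ 4) * (1 + μ ^ 4)) = (a * (1 + μ ^ 4)) * (d * (1 + μ ^ 4)) := by ring
        _ = (1 + E * μ ^ 4) * (μ ^ 4 + E) := by rw [had, hdd]
    rw [hrE]
    have h3 : E * ((1 + μ ^ 4) * (1 + μ ^ 4)) ≤ (1 + E * μ ^ 4) * (μ ^ 4 + E) := by
      have key : (1 + E * μ ^ 4) * (μ ^ 4 + E) - E * ((1 + μ ^ 4) * (1 + μ ^ 4))
          = μ ^ 4 * (1 - E) ^ 2 := by ring
      have h4 : 0 ≤ μ ^ 4 * (1 - E) ^ 2 := mul_nonneg hμ4.le (sq_nonneg _)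
      linarith [key, h4]
    exact le_of_mul_le_mul_right (by linarith [h2, h3]) (mul_pos hP hP)
  have hda : 0 ≤ d - r ^ 2 / a := by
    rw [sub_nonneg, div_le_iff₀ ha]
    calc r ^ 2 ≤ a * d := hkey
      _ = d * a := mul_comm a d
  have hsa0 : Real.sqrt a ≠ 0 := by positivity
  -- the Cholesky factor
  set L := Lmat ((Real.sqrt a : ℝ) : ℂ) (((r / Real.sqrt a : ℝ)) : ℂ)
      (((Real.sqrt (d - r ^ 2 / a) : ℝ)) : ℂ) (((Real.sqrt b : ℝ)) : ℂ)
      (((Real.sqrt c : ℝ)) : ℂ) with hLdef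
  have e1 : ((Real.sqrt a : ℝ) : ℂ) * ((Real.sqrt a : ℝ) : ℂ) = ((a : ℝ) : ℂ) := by
    norm_cast; exact Real.mul_self_sqrt ha.le
  have e2 : ((Real.sqrt a : ℝ) : ℂ) * (((r / Real.sqrt a : ℝ)) : ℂ) = ((r : ℝ) : ℂ) := by
    norm_cast
    rw [mul_div_assoc', mul_comm, mul_div_assoc, div_self hsa0, mul_one]
  have e3 : (((r / Real.sqrt a : ℝ)) : ℂ) * (((r / Real.sqrt a : ℝ)) : ℂ)
      + (((Real.sqrt (d - r ^ 2 / a) : ℝ)) : ℂ) * (((Real.sqrt (d - r ^ 2 / a) : ℝ)) : ℂ)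
      = ((d : ℝ) : ℂ) := by
    norm_cast
    rw [Real.mul_self_sqrt hda]
    have : r / Real.sqrt a * (r / Real.sqrt a) = r ^ 2 / a := by
      rw [div_mul_div_comm, Real.mul_self_sqrt ha.le]; ring
    rw [this]; ring
  have e4 : ((Real.sqrt b : ℝ) : ℂ) * ((Real.sqrt b : ℝ) : ℂ) = ((b : ℝ) : ℂ) := by
    norm_cast; exact Real.mul_self_sqrt hb
  have e5 : ((Real.sqrt c : ℝ) : ℂ) * ((Real.sqrt c : ℝ) : ℂ) = ((c : ℝ) : ℂ) := by
    norm_cast; exact Real.mul_self_sqrt hc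
  have hsac : ((Real.sqrt a : ℝ) : ℂ) ≠ 0 := by exact_mod_cast hsa0
  have e2b : ((r : ℝ) : ℂ) / ((Real.sqrt a : ℝ) : ℂ) * ((Real.sqrt a : ℝ) : ℂ) = ((r : ℝ) : ℂ) :=
    div_mul_cancel₀ _ hsac
  push_cast at e2 e3
  have hM : (Matrix.of fun (p q : Fin 2 × Fin 2) =>
      T (Matrix.single p.1 q.1 1) p.2 q.2) = Lᴴ * L := by
    ext p q
    obtain ⟨i, k⟩ := p
    obtain ⟨j, l⟩ := q
    fin_cases i <;> fin_cases k <;> fin_cases j <;> fin_cases l <;>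
      simp [Matrix.mul_apply, Fintype.sum_prod_type, Fin.sum_univ_two, hLdef, Lmat,
        Prod.ext_iff, hT11, hT22, h12, h21, Matrix.smul_apply, Matrix.add_apply,
        Matrix.single_apply_same, Matrix.single_apply_of_ne,
        Complex.star_def, Complex.conj_ofReal, e1, e2, e3, e4, e5, e2b]
  rw [hM]
  exact Matrix.posSemidef_conjTranspose_mul_self L
end
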